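/- Let Q = N(μ,Σ) on ℝ^n with Σ positive definite, x ∈ ℝ^n, x̄ = (1/n)∑x_i, μ̄ = (1/n)∑μ_i. With posterior marginal mean μ_i + σ_i(v_i/v)(x̄−μ̄) and variance σ_i²(1−v_i²/v) as from Gaussian conditioning on the mean, the change in the marginal Dawid–Sebastiani score satisfies Δ_i := [(μ_i−x_i)²/σ_i² + log σ_i²] − [(μ_i(Q_{x̄})−x_i)²/σ_i²(Q_{x̄}) + log σ_i²(Q_{x̄})] ≤ (x̄−μ̄)²/v − log(1 − v_i²/v). -/
import Mathlib


/-- with posterior marginal mean `μᵢ + σᵢ(vᵢ/v)(x̄ − μ̄)` and posterior marginal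
variance `σᵢ²(1 − vᵢ²/v)` from Gaussian conditioning on the mean, the change in the marginal
Dawid–Sebastiani score satisfies
`Δᵢ = [(μᵢ−xᵢ)²/σᵢ² + log σᵢ²] − [(μᵢ(Q_x̄)−xᵢ)²/σᵢ²(Q_x̄) + log σᵢ²(Q_x̄)]
   ≤ (x̄−μ̄)²/v − log(1 − vᵢ²/v)`. -/
theorem stmt12 (μi xi xbar μbar σi vi v : ℝ) (hσ : 0 < σi) (hv : vi ^ 2 < v) :
    ((μi - xi) ^ 2 / σi ^ 2 + Real.log (σi ^ 2)) -
      ((μi + σi * (vi / v) * (xbar - μbar) - xi) ^ 2 / (σi ^ 2 * (1 - vi ^ 2 / v)) +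
        Real.log (σi ^ 2 * (1 - vi ^ 2 / v))) ≤
      (xbar - μbar) ^ 2 / v - Real.log (1 - vi ^ 2 / v) := by
  have hv0 : 0 < v := lt_of_le_of_lt (sq_nonneg vi) hv
  have hs : 0 < 1 - vi ^ 2 / v := by
    rw [sub_pos, div_lt_one hv0]; exact hv
  have hσ2 : (0 : ℝ) < σi ^ 2 := by positivity
  rw [Real.log_mul (ne_of_gt hσ2) (ne_of_gt hs)]
  have key : (μi - xi) ^ 2 / σi ^ 2 -
      (μi + σi * (vi / v) * (xbar - μbar) - xi) ^ 2 / (σi ^ 2 * (1 - vi ^ 2 / v)) ≤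
      (xbar - μbar) ^ 2 / v := by
    rw [div_sub_div _ _ (ne_of_gt hσ2) (ne_of_gt (mul_pos hσ2 hs)), div_le_div_iff₀
      (mul_pos hσ2 (mul_pos hσ2 hs)) hv0]
    have h := sq_nonneg ((xbar - μbar) + (μi - xi) / σi * vi)
    have hσne : σi ≠ 0 := ne_of_gt hσ
    have hvne : v ≠ 0 := ne_of_gt hv0
    have expand : ((μi - xi) ^ 2 * (σi ^ 2 * (1 - vi ^ 2 / v)) -
        σi ^ 2 * (μi + σi * (vi / v) * (xbar - μbar) - xi) ^ 2) * v =
        σi ^ 4 * (-(((xbar - μbar) + (μi - xi) / σi * vi)) ^ 2 + (xbar - μbar) ^ 2 * (1 - vi^2/v)) := by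
      field_simp
      ring
    rw [expand]
    nlinarith [sq_nonneg σi, mul_pos hσ2 hσ2, sq_nonneg ((xbar - μbar) + (μi - xi) / σi * vi),
      mul_nonneg (le_of_lt (mul_pos hσ2 hσ2)) h]
  linarith
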